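/- Let n be odd with n ≥ 3 and let (λ₁, v) be a real eigenpair of the n×n real matrix A, where every component of v is nonzero. Let S = diag(v) and B = S^{-1} A S. For each j, let β_j and γ_j be, respectively, the opposite in sign of the ((n−1)/2)-th largest and of the ((n+1)/2)-th largest numbers among the n−1 off-diagonal entries b_{1j}, …, b_{j−1,j}, b_{j+1,j}, …, b_{nj} of column j of B, and let F = [f_{ij}] = [b_{ij} + β_j] and G = [g_{ij}] = [b_{ij} + γ_j]. If λ is a complex eigenvalue of A with λ ≠ λ₁, then |λ| ≤ min{ max_{1≤i≤n} (|f_{ii}| + r̂_i(F^T)), max_{1≤i≤n} (|g_{ii}| + r̂_i(G^T)) }, where r̂_i(F^T) and r̂_i(G^T) are the radii of the i-th Gershgorin discs of the second type of F^T and G^T (computed from the i-th columns of F and G). -/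

import Mathlib

open Matrix
open scoped ENNReal

/-- Non-increasing (descending) sort of a list of reals. -/
noncomputable def sortDesc (l : List ℝ) : List ℝ := (l.insertionSort (· ≤ ·)).reverse

/-- Given the descending rearrangement `l` of `n` numbers, the sum of the largest
(about) half minus the sum of the smallest (about) half, skipping the middle
element when `n` is odd. -/
noncomputable def halfSumDiff (n : ℕ) (l : List ℝ) : ℝ :=
  if n % 2 = 1 then (l.take ((n - 1) / 2)).sum - (l.drop ((n + 1) / 2)).sum
  else (l.take (n / 2)).sum - (l.drop (n / 2)).sum

/-- Radius of the `i`-th Gershgorin disc of the second type of `M`, computed from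
the `i`-th row of `M` with the diagonal entry replaced by `0`. -/
noncomputable def secondTypeRadius {n : ℕ} (M : Matrix (Fin n) (Fin n) ℝ) (i : Fin n) : ℝ :=
  halfSumDiff n (sortDesc (List.ofFn fun j : Fin n => if j = i then 0 else M i j))

/-- The `i`-th Gershgorin disc of the second type of `M`. -/
noncomputable def secondTypeDisc {n : ℕ} (M : Matrix (Fin n) (Fin n) ℝ) (i : Fin n) : Set ℂ :=
  Metric.closedBall ((M i i : ℝ) : ℂ) (secondTypeRadius M i)

/-- The Gershgorin region of the second type of `M`. -/
noncomputable def secondTypeRegion {n : ℕ} (M : Matrix (Fin n) (Fin n) ℝ) : Set ℂ :=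
  ⋃ i : Fin n, secondTypeDisc M i

/-- `μ` is a (complex) eigenvalue of the real matrix `A`, i.e. a complex root of
its characteristic polynomial. -/
def IsEigenvalueC {n : ℕ} (A : Matrix (Fin n) (Fin n) ℝ) (μ : ℂ) : Prop :=
  ((A.map ((↑) : ℝ → ℂ)).charpoly).IsRoot μ

/-- The `k`-th largest element (1-indexed) among the `n - 1` off-diagonal entries of
column `j` of `B`. -/
noncomputable def kthLargestOffDiag {n : ℕ} (B : Matrix (Fin n) (Fin n) ℝ) (j : Fin n)
    (k : ℕ) : ℝ :=
  (sortDesc (((List.ofFn fun i : Fin n => B i j).eraseIdx j.val))).getD (k - 1) 0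

/-- The ℓ_p norm of a vector in ℝ^n. -/
noncomputable def lpNorm {n : ℕ} (p : ℝ≥0∞) (x : Fin n → ℝ) : ℝ :=
  @norm (PiLp p fun _ : Fin n => ℝ) _ ((WithLp.equiv p (∀ _ : Fin n, ℝ)).symm x)

/-- The seminorm-like quantity `τ_p(B)`: the supremum of `‖Bᵀ x‖_p` over all real
vectors `x` with `xᵀ e = 0` and `‖x‖_p = 1`. -/
noncomputable def tau {n : ℕ} (p : ℝ≥0∞) (B : Matrix (Fin n) (Fin n) ℝ) : ℝ :=
  sSup { t : ℝ | ∃ x : Fin n → ℝ, (∑ i, x i) = 0 ∧ lpNorm p x = 1 ∧ t = lpNorm p (Bᵀ *ᵥ x) }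

/-- The Ostrowski–Brauer set `Γ(M)` of a real square matrix `M`. -/
noncomputable def brauerSet {n : ℕ} (M : Matrix (Fin n) (Fin n) ℝ) : Set ℂ :=
  ⋃ (i : Fin n) (j : Fin n) (_ : i < j),
    { y : ℂ | ‖y - (M i i : ℝ)‖ * ‖y - (M j j : ℝ)‖ ≤
        (∑ k ∈ Finset.univ.filter fun k => k ≠ i, |M i k|) *
        (∑ k ∈ Finset.univ.filter fun k => k ≠ j, |M j k|) }

/-- `cs_j(A)` from Definition 2.3: sorted column sums difference. -/
noncomputable def csCol {n : ℕ} (A : Matrix (Fin n) (Fin n) ℝ) (j : Fin n) : ℝ :=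
  halfSumDiff n (sortDesc (List.ofFn fun i : Fin n => A i j))


private lemma sum_map_sub_const (c : ℝ) (l : List ℝ) :
    (l.map (fun x => x - c)).sum = l.sum - l.length * c := by
  induction l with
  | nil => simp
  | cons a t ih => simp [ih]; ring

private lemma sum_map_sub_const' (c : ℝ) (l : List ℝ) :
    (l.map (fun x => c - x)).sum = l.length * c - l.sum := by
  induction l with
  | nil => simp
  | cons a t ih => simp [ih]; ring

private lemma sortDesc_perm (l : List ℝ) : (sortDesc l).Perm l :=
  (List.reverse_perm _).trans (List.perm_insertionSort _ l)

private lemma sortDesc_length (l : List ℝ) : (sortDesc l).length = l.length :=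
  (sortDesc_perm l).length_eq

private lemma sortDesc_sorted (l : List ℝ) : (sortDesc l).Pairwise (· ≥ ·) := by
  unfold sortDesc
  rw [List.pairwise_reverse]
  exact List.pairwise_insertionSort (· ≤ ·) l

/-- median formula for halfSumDiff on a descending-sorted list of odd length. -/
private lemma halfSumDiff_eq_sum_abs {n : ℕ} (hodd : n % 2 = 1) (s : List ℝ)
    (hs : s.Pairwise (· ≥ ·)) (hlen : s.length = n)
    (hm : (n - 1) / 2 < s.length) :
    halfSumDiff n s = (s.map (fun x => |x - s[(n - 1)/2]|)).sum := by
  set m := (n - 1) / 2 with hmdef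
  set c := s[m] with hc
  have hn : n = 2 * m + 1 := by omega
  have hdropeq : s.drop m = c :: s.drop (m + 1) := List.drop_eq_getElem_cons hm
  have hsplit : s = s.take m ++ (c :: s.drop (m + 1)) := by
    rw [← hdropeq, List.take_append_drop]
  have hpw := List.pairwise_iff_getElem.mp hs
  have htake_ge : ∀ x ∈ s.take m, c ≤ x := by
    intro x hx
    obtain ⟨k, hk, hk2⟩ := List.mem_iff_getElem.mp hx
    have hk' : k < m := by
      have := hk; rw [List.length_take] at this; omega
    rw [List.getElem_take] at hk2
    subst hk2
    exact hpw k m (by omega) hm hk'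
  have hdrop_le : ∀ x ∈ s.drop (m + 1), x ≤ c := by
    intro x hx
    obtain ⟨k, hk, hk2⟩ := List.mem_iff_getElem.mp hx
    rw [List.getElem_drop] at hk2
    subst hk2
    exact hpw m (m + 1 + k) hm (by rw [List.length_drop] at hk; omega) (by omega)
  have hlt : (s.take m).length = m := by rw [List.length_take]; omega
  have hld : (s.drop (m+1)).length = m := by rw [List.length_drop]; omega
  have h1 : ((s.take m).map (fun x => |x - c|)).sum = (s.take m).sum - m * c := by
    rw [show ((s.take m).map (fun x => |x - c|)) = ((s.take m).map (fun x => x - c)) from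
      List.map_congr_left (fun x hx => abs_of_nonneg (by linarith [htake_ge x hx])),
      sum_map_sub_const, hlt]
  have h2 : ((s.drop (m+1)).map (fun x => |x - c|)).sum = m * c - (s.drop (m+1)).sum := by
    rw [show ((s.drop (m+1)).map (fun x => |x - c|)) = ((s.drop (m+1)).map (fun x => c - x)) from
      List.map_congr_left (fun x hx =>
        abs_sub_comm x c ▸ abs_of_nonneg (by linarith [hdrop_le x hx])),
      sum_map_sub_const', hld]
  have hfinal : (s.map (fun x => |x - c|)).sum
      = (s.take m).sum - m*c + (0 : ℝ) + (m*c - (s.drop (m+1)).sum) := by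
    conv_lhs => rw [hsplit]
    rw [List.map_append, List.sum_append, List.map_cons, List.sum_cons, h1, h2]
    simp
  rw [hfinal]
  unfold halfSumDiff
  rw [if_pos hodd]
  have hdd : (n+1)/2 = m + 1 := by omega
  conv_lhs => rw [show s.drop ((n+1)/2) = s.drop (m+1) by rw [hdd]]
  ring

private lemma gersh_key {n : ℕ} (hn1 : 1 ≤ n) (hodd : n % 2 = 1)
    (M : Matrix (Fin n) (Fin n) ℝ) (mu : ℂ) (x : Fin n → ℂ) (hx : x ≠ 0)
    (hMx : (M.map ((↑) : ℝ → ℂ)) *ᵥ x = mu • x) (hsum : (∑ j, x j) = 0) :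
    ∃ i, ‖mu‖ ≤ |M i i| + secondTypeRadius M i := by
  obtain ⟨i, -, hi⟩ := Finset.exists_max_image Finset.univ (fun j => ‖x j‖)
    ⟨⟨0, by omega⟩, Finset.mem_univ _⟩
  have hi' : ∀ j, ‖x j‖ ≤ ‖x i‖ :=
    fun j => hi j (Finset.mem_univ j)
  have hxi : 0 < ‖x i‖ := by
    obtain ⟨k, hk⟩ := Function.ne_iff.mp hx
    exact lt_of_lt_of_le (by simpa using hk) (hi' k)
  refine ⟨i, ?_⟩
  set a : Fin n → ℝ := fun j => if j = i then 0 else M i j with ha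
  set l : List ℝ := List.ofFn a with hl
  set s : List ℝ := sortDesc l with hs
  have hslen : s.length = n := by
    rw [hs, (sortDesc_perm l).length_eq, hl, List.length_ofFn]
  have hmlt : (n - 1) / 2 < s.length := by omega
  set c : ℝ := s[(n - 1)/2] with hc
  -- row equation
  have hrow : (∑ j, ((M i j : ℂ) * x j)) = mu * x i := by
    have := congrFun hMx i
    simpa [Matrix.mulVec, dotProduct, Matrix.map_apply] using this
  have hrow2 : (∑ j, (((a j - c : ℝ) : ℂ) * x j)) = mu * x i - (M i i) * x i := by
    have h1 : (∑ j, (((a j : ℝ) : ℂ) * x j)) = mu * x i - (M i i) * x i := by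
      rw [← hrow]
      have heach : ∀ j, (((a j : ℝ) : ℂ) * x j)
          = (M i j : ℂ) * x j - (if j = i then (M i i : ℂ) * x i else 0) := by
        intro j
        by_cases h : j = i
        · subst h; simp [ha]
        · simp [ha, h]
      rw [Finset.sum_congr rfl (fun j _ => heach j), Finset.sum_sub_distrib,
        Finset.sum_ite_eq' Finset.univ i (fun _ => (M i i : ℂ) * x i)]
      simp
    calc (∑ j, (((a j - c : ℝ) : ℂ) * x j))
        = (∑ j, (((a j : ℝ) : ℂ) * x j)) - c * (∑ j, x j) := by
          rw [Finset.mul_sum, ← Finset.sum_sub_distrib]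
          congr 1; ext j; push_cast; ring
      _ = mu * x i - (M i i) * x i := by rw [hsum, h1]; ring
  -- radius identity
  have hrad : secondTypeRadius M i = ∑ j, |a j - c| := by
    have hperm : (s.map (fun t => |t - c|)).Perm (l.map (fun t => |t - c|)) :=
      (sortDesc_perm l).map _
    have : (s.map (fun t => |t - c|)).sum = ∑ j, |a j - c| := by
      rw [hperm.sum_eq, hl, List.map_ofFn, List.sum_ofFn]
      rfl
    rw [secondTypeRadius, ← hl, ← hs,
      halfSumDiff_eq_sum_abs hodd s (sortDesc_sorted l) hslen hmlt, ← hc, this]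
  -- the estimate
  have hest : ‖mu * x i - (M i i) * x i‖
      ≤ (∑ j, |a j - c|) * ‖x i‖ := by
    rw [← hrow2]
    calc ‖∑ j, (((a j - c : ℝ) : ℂ) * x j)‖
        ≤ ∑ j, ‖(((a j - c : ℝ) : ℂ) * x j)‖ :=
          norm_sum_le _ _
      _ ≤ ∑ j, |a j - c| * ‖x i‖ := by
          refine Finset.sum_le_sum (fun j _ => ?_)
          rw [norm_mul, Complex.norm_real, Real.norm_eq_abs]
          exact mul_le_mul_of_nonneg_left (hi' j) (abs_nonneg _)
      _ = (∑ j, |a j - c|) * ‖x i‖ := by rw [Finset.sum_mul]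
  have hmu : ‖mu‖ * ‖x i‖
      ≤ (|M i i| + ∑ j, |a j - c|) * ‖x i‖ := by
    calc ‖mu‖ * ‖x i‖ = ‖mu * x i‖ := (norm_mul _ _).symm
      _ ≤ ‖(M i i : ℂ) * x i‖ + ‖mu * x i - (M i i) * x i‖ := by
          nth_rewrite 1 [show mu * x i = (M i i : ℂ) * x i + (mu * x i - (M i i) * x i) by ring]
          exact norm_add_le _ _
      _ ≤ |M i i| * ‖x i‖ + (∑ j, |a j - c|) * ‖x i‖ := by
          rw [norm_mul, Complex.norm_real, Real.norm_eq_abs]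
          exact add_le_add le_rfl hest
      _ = (|M i i| + ∑ j, |a j - c|) * ‖x i‖ := by ring
  rw [hrad]
  exact le_of_mul_le_mul_right hmu hxi

private lemma charpoly_eval_complex {n : ℕ} (M : Matrix (Fin n) (Fin n) ℂ) (μ : ℂ) :
    M.charpoly.eval μ = (μ • (1 : Matrix (Fin n) (Fin n) ℂ) - M).det := by
  rw [Matrix.charpoly, ← Polynomial.coe_evalRingHom, RingHom.map_det]
  congr 1
  ext i j
  by_cases h : i = j
  · subst h; simp [Matrix.charmatrix_apply_eq, Matrix.one_apply]
  · simp [Matrix.charmatrix_apply_ne _ _ _ h, Matrix.one_apply, h]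

private lemma main_aux {n : ℕ} (hn1 : 1 ≤ n) (hodd : n % 2 = 1)
    (A : Matrix (Fin n) (Fin n) ℝ) (lam1 : ℝ) (v : Fin n → ℝ) (hv : ∀ i, v i ≠ 0)
    (hAv : A *ᵥ v = lam1 • v) (S B : Matrix (Fin n) (Fin n) ℝ)
    (hS : S = Matrix.diagonal v) (hB : B = S⁻¹ * A * S)
    (C : Matrix (Fin n) (Fin n) ℝ) (cc : Fin n → ℝ) (hC : ∀ i j, C i j = B i j + cc j)
    (mu : ℂ) (hmu : IsEigenvalueC A mu) (hne : mu ≠ (lam1 : ℂ))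
    (hne' : (Finset.univ : Finset (Fin n)).Nonempty) :
    ‖mu‖ ≤ Finset.univ.sup' hne' (fun i => |C i i| + secondTypeRadius Cᵀ i) := by
  have hdet : IsUnit S.det := by
    rw [hS, Matrix.det_diagonal]
    exact (Finset.prod_ne_zero_iff.mpr fun i _ => hv i).isUnit
  have hSinvS : S⁻¹ * S = 1 := Matrix.nonsing_inv_mul S hdet
  have hmapmul : ∀ P Q : Matrix (Fin n) (Fin n) ℝ,
      ((P * Q).map ((↑) : ℝ → ℂ)) = P.map ((↑) : ℝ → ℂ) * Q.map ((↑) : ℝ → ℂ) :=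
    fun P Q => Matrix.map_mul (f := Complex.ofRealHom)
  have hmapone : ((1 : Matrix (Fin n) (Fin n) ℝ).map ((↑) : ℝ → ℂ)) = 1 :=
    Matrix.map_one _ Complex.ofReal_zero Complex.ofReal_one
  set W := (S⁻¹).map ((↑) : ℝ → ℂ) with hW
  set T := S.map ((↑) : ℝ → ℂ) with hT
  have hWT : W * T = 1 := by rw [hW, hT, ← hmapmul, hSinvS, hmapone]
  have hdetmu : (mu • (1 : Matrix (Fin n) (Fin n) ℂ) - A.map ((↑) : ℝ → ℂ)).det = 0 := by
    rw [← charpoly_eval_complex]; exact hmu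
  have hBc : B.map ((↑) : ℝ → ℂ) = W * (A.map ((↑) : ℝ → ℂ)) * T := by
    rw [hB, hmapmul, hmapmul]
  have h1 : mu • (1 : Matrix (Fin n) (Fin n) ℂ) - B.map ((↑) : ℝ → ℂ)
      = W * (mu • (1 : Matrix (Fin n) (Fin n) ℂ) - A.map ((↑) : ℝ → ℂ)) * T := by
    rw [hBc, Matrix.mul_sub, Matrix.sub_mul]
    congr 1
    rw [Matrix.mul_smul, Matrix.mul_one, Matrix.smul_mul, hWT]
  have hdetB : (mu • (1 : Matrix (Fin n) (Fin n) ℂ) - (B.map ((↑) : ℝ → ℂ))ᵀ).det = 0 := by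
    have h2 : (mu • (1 : Matrix (Fin n) (Fin n) ℂ) - (B.map ((↑) : ℝ → ℂ))ᵀ)
        = (mu • (1 : Matrix (Fin n) (Fin n) ℂ) - B.map ((↑) : ℝ → ℂ))ᵀ := by
      rw [Matrix.transpose_sub, Matrix.transpose_smul, Matrix.transpose_one]
    rw [h2, Matrix.det_transpose, h1, Matrix.det_mul, Matrix.det_mul, hdetmu]
    ring
  obtain ⟨x, hx0, hx⟩ := Matrix.exists_mulVec_eq_zero_iff.mpr hdetB
  have hBx : ((B.map ((↑) : ℝ → ℂ))ᵀ) *ᵥ x = mu • x := by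
    have := hx
    rw [Matrix.sub_mulVec, sub_eq_zero, Matrix.smul_mulVec, Matrix.one_mulVec] at this
    exact this.symm
  -- row sums of B are lam1
  have hS1 : S *ᵥ (fun _ => (1 : ℝ)) = v := by
    rw [hS]; ext i
    simp [Matrix.mulVec, Matrix.diagonal, dotProduct]
  have hinv_v : S⁻¹ *ᵥ v = fun _ => (1 : ℝ) := by
    rw [← hS1, Matrix.mulVec_mulVec, hSinvS, Matrix.one_mulVec]
  have hBones : B *ᵥ (fun _ => (1 : ℝ)) = fun _ => lam1 := by
    rw [hB, ← Matrix.mulVec_mulVec, ← Matrix.mulVec_mulVec, hS1, hAv,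
      Matrix.mulVec_smul, hinv_v]
    ext i; simp
  have hrowB : ∀ i, (∑ j, B i j) = lam1 := by
    intro i
    have := congrFun hBones i
    simpa [Matrix.mulVec, dotProduct] using this
  -- sum of x is zero
  have hsum : (∑ j, x j) = 0 := by
    have h3 : mu * (∑ j, x j) = (lam1 : ℂ) * (∑ j, x j) := by
      calc mu * (∑ j, x j) = ∑ i, mu * x i := by rw [Finset.mul_sum]
        _ = ∑ i, (((B.map ((↑) : ℝ → ℂ))ᵀ) *ᵥ x) i := by
            refine Finset.sum_congr rfl fun i _ => ?_
            rw [hBx]; rfl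
        _ = ∑ i, ∑ j, ((B j i : ℂ)) * x j := by
            refine Finset.sum_congr rfl fun i _ => ?_
            simp [Matrix.mulVec, dotProduct, Matrix.transpose_apply, Matrix.map_apply]
        _ = ∑ j, ∑ i, ((B j i : ℂ)) * x j := Finset.sum_comm
        _ = ∑ j, (lam1 : ℂ) * x j := by
            refine Finset.sum_congr rfl fun j _ => ?_
            rw [← Finset.sum_mul]
            norm_cast
            rw [hrowB j]
        _ = (lam1 : ℂ) * (∑ j, x j) := by rw [Finset.mul_sum]
    have h4 : (mu - (lam1 : ℂ)) * (∑ j, x j) = 0 := by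
      rw [sub_mul, h3]; ring
    rcases mul_eq_zero.mp h4 with h | h
    · exact absurd (sub_eq_zero.mp h) hne
    · exact h
  -- C transpose eigen-equation
  have hCx : ((Cᵀ).map ((↑) : ℝ → ℂ)) *ᵥ x = mu • x := by
    ext i
    have : (((Cᵀ).map ((↑) : ℝ → ℂ)) *ᵥ x) i
        = ∑ j, ((B j i : ℂ) + (cc i : ℂ)) * x j := by
      simp only [Matrix.mulVec, dotProduct, Matrix.map_apply, Matrix.transpose_apply]
      refine Finset.sum_congr rfl fun j _ => ?_
      rw [hC j i]; push_cast; ring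
    rw [this]
    have h5 : ∑ j, ((B j i : ℂ) + (cc i : ℂ)) * x j
        = (∑ j, (B j i : ℂ) * x j) + (cc i : ℂ) * (∑ j, x j) := by
      rw [Finset.mul_sum, ← Finset.sum_add_distrib]
      refine Finset.sum_congr rfl fun j _ => by ring
    rw [h5, hsum, mul_zero, add_zero]
    have := congrFun hBx i
    simpa [Matrix.mulVec, dotProduct, Matrix.transpose_apply, Matrix.map_apply] using this
  obtain ⟨i, hle⟩ := gersh_key hn1 hodd Cᵀ mu x hx0 hCx hsum
  refine hle.trans ?_
  have : |Cᵀ i i| = |C i i| := rfl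
  rw [this]
  exact Finset.le_sup' (fun i => |C i i| + secondTypeRadius Cᵀ i) (Finset.mem_univ i)

/-- Theorem 7, odd case bound (6): with `F` and `G` obtained from
`B = S⁻¹ A S` by Theorem 5, every eigenvalue `λ ≠ λ₁` of `A` satisfies
`|λ| ≤ min{max_i (|f_ii| + r̂_i(Fᵀ)), max_i (|g_ii| + r̂_i(Gᵀ))}`. -/
theorem stmt12 {n : ℕ} (hodd : Odd n) (hn : 3 ≤ n) (A : Matrix (Fin n) (Fin n) ℝ)
    (lam1 : ℝ) (v : Fin n → ℝ) (hv : ∀ i, v i ≠ 0) (hAv : A *ᵥ v = lam1 • v)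
    (S B : Matrix (Fin n) (Fin n) ℝ) (hS : S = Matrix.diagonal v) (hB : B = S⁻¹ * A * S)
    (F G : Matrix (Fin n) (Fin n) ℝ)
    (hF : ∀ i j, F i j = B i j + -kthLargestOffDiag B j ((n - 1) / 2))
    (hG : ∀ i j, G i j = B i j + -kthLargestOffDiag B j ((n + 1) / 2))
    (mu : ℂ) (hmu : IsEigenvalueC A mu) (hne : mu ≠ (lam1 : ℂ)) :
    ‖mu‖ ≤
      min
        (Finset.univ.sup' ⟨(⟨0, by omega⟩ : Fin n), Finset.mem_univ _⟩
          (fun i => |F i i| + secondTypeRadius Fᵀ i))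
        (Finset.univ.sup' ⟨(⟨0, by omega⟩ : Fin n), Finset.mem_univ _⟩
          (fun i => |G i i| + secondTypeRadius Gᵀ i)) := by
  
  have hodd' : n % 2 = 1 := Nat.odd_iff.mp hodd
  have hn1 : 1 ≤ n := by omega
  refine le_min ?_ ?_
  · exact main_aux hn1 hodd' A lam1 v hv hAv S B hS hB F
      (fun j => -kthLargestOffDiag B j ((n - 1) / 2)) hF mu hmu hne _
  · exact main_aux hn1 hodd' A lam1 v hv hAv S B hS hB G
      (fun j => -kthLargestOffDiag B j ((n + 1) / 2)) hG mu hmu hne _
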